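/- Let a, b ≥ 2 be coprime integers and r ≥ 0. Then ℓ(a,b,(r+1)·a·b) = r, and ℓ(a,b,m) ≥ r + 1 for every integer m > (r+1)·a·b. In particular, the maximum element of S(a,b,r) is (r+1)·a·b. -/
import Mathlib

open Set

/-- ℓ(a,b,m): the number of pairs (i,j) of positive integers with a·i + b·j = m. -/
noncomputable def lcount (a b m : ℕ) : ℕ :=
  {q : ℕ × ℕ | 0 < q.1 ∧ 0 < q.2 ∧ a * q.1 + b * q.2 = m}.ncard

lemma lset_finite (a b m : ℕ) (ha : 0 < a) (hb : 0 < b) :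
    {q : ℕ × ℕ | 0 < q.1 ∧ 0 < q.2 ∧ a * q.1 + b * q.2 = m}.Finite := by
  apply Set.Finite.subset ((Set.finite_Icc 0 m).prod (Set.finite_Icc 0 m))
  rintro ⟨i, j⟩ ⟨hi, hj, h⟩
  simp only at hi hj h
  have h1 : i ≤ a * i := Nat.le_mul_of_pos_left i ha
  have h2 : j ≤ b * j := Nat.le_mul_of_pos_left j hb
  simp only [Set.mem_prod, Set.mem_Icc]
  omega

lemma lcount_mul (a b r : ℕ) (ha : 2 ≤ a) (hb : 2 ≤ b) (hab : Nat.Coprime a b) :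
    lcount a b ((r + 1) * (a * b)) = r := by
  have hset : {q : ℕ × ℕ | 0 < q.1 ∧ 0 < q.2 ∧ a * q.1 + b * q.2 = (r + 1) * (a * b)}
      = ↑((Finset.Icc 1 r).image fun k => (b * k, a * (r + 1 - k))) := by
    ext ⟨i, j⟩
    simp only [Set.mem_setOf_eq, Finset.coe_image, Set.mem_image, Finset.mem_coe,
      Finset.mem_Icc, Prod.mk.injEq]
    constructor
    · rintro ⟨hi, hj, h⟩
      have hdvd : b ∣ a * i := by
        have hsum : b ∣ a * i + b * j := ⟨(r + 1) * a, by rw [h]; ring⟩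
        exact (Nat.dvd_add_iff_left (dvd_mul_right b j)).mpr hsum
      have hbi : b ∣ i := (Nat.Coprime.dvd_of_dvd_mul_left hab.symm) hdvd
      obtain ⟨k, rfl⟩ := hbi
      have hk1 : 1 ≤ k := by
        rcases Nat.eq_zero_or_pos k with h0 | h0
        · subst h0; simp at hi
        · exact h0
      have heq : b * (a * k) + b * j = b * ((r + 1) * a) := by
        calc b * (a * k) + b * j = a * (b * k) + b * j := by ring
          _ = (r + 1) * (a * b) := h
          _ = b * ((r + 1) * a) := by ring
      have heq' : b * (a * k + j) = b * ((r + 1) * a) := by rw [Nat.mul_add]; exact heq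
      have heq2 : a * k + j = (r + 1) * a :=
        Nat.eq_of_mul_eq_mul_left (show 0 < b by omega) heq'
      have hkr : k ≤ r := by
        by_contra hk
        push_neg at hk
        have h4 : a * (r + 1) ≤ a * k := Nat.mul_le_mul_left a (by omega)
        have h5 : a * (r + 1) = (r + 1) * a := by ring
        omega
      refine ⟨k, ⟨hk1, hkr⟩, rfl, ?_⟩
      have : a * (r + 1 - k) + a * k = a * (r + 1) := by
        rw [← Nat.mul_add]; congr 1; omega
      have h3 : a * (r + 1) = (r + 1) * a := by ring
      omega
    · rintro ⟨k, ⟨hk1, hkr⟩, hi, hj⟩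
      subst hi; subst hj
      have hk1' : 1 ≤ r + 1 - k := by omega
      refine ⟨by positivity, by positivity, ?_⟩
      have : r + 1 - k + k = r + 1 := by omega
      calc a * (b * k) + b * (a * (r + 1 - k)) = a * b * ((r + 1 - k) + k) := by ring
        _ = (r + 1) * (a * b) := by rw [this]; ring
  rw [lcount, hset, Set.ncard_coe_finset, Finset.card_image_of_injective, Nat.card_Icc]
  · omega
  · intro x y hxy
    simp only [Prod.mk.injEq] at hxy
    exact Nat.eq_of_mul_eq_mul_left (by omega) hxy.1

lemma lcount_ge (a b r : ℕ) (ha : 2 ≤ a) (hb : 2 ≤ b) (hab : Nat.Coprime a b)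
    (m : ℕ) (hm : (r + 1) * (a * b) < m) : r + 1 ≤ lcount a b m := by
  haveI : NeZero b := ⟨by omega⟩
  obtain ⟨i₀, hi₀1, hi₀b, hmod⟩ : ∃ i₀, 1 ≤ i₀ ∧ i₀ ≤ b ∧ a * i₀ ≡ m [MOD b] := by
    have hu : IsUnit (a : ZMod b) := (ZMod.isUnit_iff_coprime a b).mpr hab
    set x : ZMod b := (a : ZMod b)⁻¹ * (m : ZMod b) with hx
    have hax : (a : ZMod b) * x = (m : ZMod b) := by
      rw [hx, ← mul_assoc, ZMod.mul_inv_of_unit _ hu, one_mul]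
    by_cases hv : x.val = 0
    · refine ⟨b, by omega, le_refl b, ?_⟩
      have hx0 : x = 0 := (ZMod.val_eq_zero x).mp hv
      rw [← ZMod.natCast_eq_natCast_iff]
      push_cast
      rw [ZMod.natCast_self, mul_zero, ← hax, hx0, mul_zero]
    · refine ⟨x.val, by omega, le_of_lt (ZMod.val_lt x), ?_⟩
      rw [← ZMod.natCast_eq_natCast_iff]
      push_cast
      have hxv : ((x.val : ℕ) : ZMod b) = x := (ZMod.natCast_val x).trans (ZMod.cast_id ..)
      rw [hxv, hax]
  have hab_le : a * i₀ ≤ a * b := Nat.mul_le_mul_left a hi₀b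
  have hle : a * i₀ ≤ m := by nlinarith
  obtain ⟨c, hc⟩ : b ∣ (m - a * i₀) := (Nat.modEq_iff_dvd' hle).mp hmod
  have hm' : m = a * i₀ + b * c := by omega
  have hcr : r * a < c := by nlinarith
  set f : ℕ → ℕ × ℕ := fun t => (i₀ + t * b, c - t * a) with hf
  have hsub : ↑((Finset.range (r + 1)).image f) ⊆
      {q : ℕ × ℕ | 0 < q.1 ∧ 0 < q.2 ∧ a * q.1 + b * q.2 = m} := by
    rintro ⟨i, j⟩ hij
    simp only [Finset.coe_image, Set.mem_image, Finset.mem_coe, Finset.mem_range] at hij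
    obtain ⟨t, ht, hft⟩ := hij
    rw [hf] at hft
    simp only [Prod.mk.injEq] at hft
    obtain ⟨hi, hj⟩ := hft
    have hta : t * a ≤ r * a := Nat.mul_le_mul_right a (by omega)
    have htc : t * a < c := lt_of_le_of_lt hta hcr
    refine ⟨by omega, by omega, ?_⟩
    subst hi; subst hj
    have hcc : c - t * a + t * a = c := by omega
    zify [le_of_lt htc]
    push_cast [hm']
    ring
  have hfin := lset_finite a b m (by omega) (by omega)
  have hcard := Set.ncard_le_ncard hsub hfin
  rw [Set.ncard_coe_finset] at hcard
  rw [Finset.card_image_of_injective] at hcard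
  · rw [Finset.card_range] at hcard; exact le_trans (le_of_eq rfl) (by rw [lcount]; omega)
  · intro x y hxy
    rw [hf] at hxy
    simp only [Prod.mk.injEq] at hxy
    have := hxy.1
    have : x * b = y * b := by omega
    exact Nat.eq_of_mul_eq_mul_right (by omega) this

theorem stmt_7 (a b r : ℕ) (ha : 2 ≤ a) (hb : 2 ≤ b) (hab : Nat.Coprime a b) :
    lcount a b ((r + 1) * (a * b)) = r ∧
    (∀ m : ℕ, (r + 1) * (a * b) < m → r + 1 ≤ lcount a b m) ∧
    IsGreatest {m : ℕ | 0 < m ∧ lcount a b m ≤ r} ((r + 1) * (a * b)) := by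
  refine ⟨lcount_mul a b r ha hb hab, fun m hm => lcount_ge a b r ha hb hab m hm, ?_, ?_⟩
  · exact ⟨by positivity, le_of_eq (lcount_mul a b r ha hb hab)⟩
  · rintro m ⟨hm0, hmr⟩
    by_contra h
    push_neg at h
    have := lcount_ge a b r ha hb hab m h
    omega
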